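/- Let n ≥ 5 be an integer with n ≠ 6, and suppose the field Ω = ℚ(cot(π/n)) is flat, i.e. for every subfield E of Ω containing ℚ, every field automorphism σ of E satisfies σ ∘ σ = id. Then n ∈ {8, 12, 24}. -/

import Mathlib

set_option maxHeartbeats 1000000

open Real in
lemma sin_ne_zero_k (n k : ℕ) (h1 : 1 ≤ k) (h2 : k ≤ n - 1) (hn : 2 ≤ n) :
    Real.sin (k * π / n) ≠ 0 := by
  have hn0 : (0:ℝ) < n := by positivity
  have h1' : (1:ℝ) ≤ k := by exact_mod_cast h1
  have h2' : (k:ℝ) ≤ (n:ℝ) - 1 := by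
    have h3 : (k:ℝ) ≤ ((n-1 : ℕ):ℝ) := by exact_mod_cast h2
    have h4 : ((n-1:ℕ):ℝ) = (n:ℝ) - 1 := by
      have h5 : 1 ≤ n := by omega
      push_cast [Nat.cast_sub h5]; ring
    linarith [h4 ▸ h3]
  have hpos : 0 < k * π / n := by
    have := Real.pi_pos; positivity
  have hlt : k * π / n < π := by
    rw [div_lt_iff₀ hn0]
    have := Real.pi_pos
    nlinarith
  exact ne_of_gt (Real.sin_pos_of_pos_of_lt_pi hpos hlt)

open Real in
lemma cot_add' {a b : ℝ} (ha : Real.sin a ≠ 0) (hb : Real.sin b ≠ 0)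
    (hab : Real.sin (a+b) ≠ 0) :
    Real.cot (a+b) = (Real.cot a * Real.cot b - 1) / (Real.cot a + Real.cot b) := by
  have hD : Real.cot a + Real.cot b = Real.sin (a+b) / (Real.sin a * Real.sin b) := by
    rw [Real.cot_eq_cos_div_sin, Real.cot_eq_cos_div_sin, Real.sin_add]; field_simp; ring
  have hN : Real.cot a * Real.cot b - 1 = Real.cos (a+b) / (Real.sin a * Real.sin b) := by
    rw [Real.cot_eq_cos_div_sin, Real.cot_eq_cos_div_sin, Real.cos_add]; field_simp
  rw [Real.cot_eq_cos_div_sin, hN, hD]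
  rw [div_div_div_cancel_right₀]
  exact mul_ne_zero ha hb

open Real in
lemma cos_two_mul_cot {x : ℝ} (hx : Real.sin x ≠ 0) :
    Real.cos (2*x) = (Real.cot x ^ 2 - 1) / (Real.cot x ^ 2 + 1) := by
  rw [Real.cos_two_mul', Real.cot_eq_cos_div_sin]
  have hs := Real.sin_sq_add_cos_sq x
  have hd : (Real.cos x / Real.sin x) ^ 2 + 1 ≠ 0 := by positivity
  field_simp
  rw [add_comm (Real.cos x ^ 2), hs, mul_one]

open Real in
lemma cot_two_mul {x : ℝ} (hx : Real.sin x ≠ 0) (h2x : Real.sin (2*x) ≠ 0) :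
    Real.cot (2*x) = (Real.cot x ^ 2 - 1) / (2 * Real.cot x) := by
  have hc : Real.cos x ≠ 0 := by
    intro h; apply h2x; rw [Real.sin_two_mul, h]; ring
  rw [Real.cot_eq_cos_div_sin, Real.cot_eq_cos_div_sin, Real.cos_two_mul', Real.sin_two_mul]
  field_simp

open Real in
lemma cot_pi_sub (x : ℝ) : Real.cot (π - x) = - Real.cot x := by
  rw [Real.cot_eq_cos_div_sin, Real.cot_eq_cos_div_sin, Real.cos_pi_sub, Real.sin_pi_sub]
  ring

open Real IntermediateField in
lemma cot_mem (n : ℕ) (hn : 2 ≤ n) (k : ℕ) (h1 : 1 ≤ k) (h2 : k ≤ n - 1) :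
    Real.cot (k * Real.pi / n) ∈ adjoin ℚ {Real.cot (Real.pi / n)} := by
  induction k with
  | zero => omega
  | succ k ih =>
    rcases Nat.lt_or_ge 1 (k+1) with h | h
    · have hk1 : 1 ≤ k := by omega
      have hk2 : k ≤ n - 1 := by omega
      have hmem := ih hk1 hk2
      have h1mem : Real.cot (Real.pi / n) ∈ adjoin ℚ {Real.cot (Real.pi / n)} :=
        mem_adjoin_simple_self ℚ _
      have hsin1 : Real.sin (Real.pi / n) ≠ 0 := by
        have := sin_ne_zero_k n 1 le_rfl (by omega) hn
        simpa using this
      have key : Real.cot ((k+1 : ℕ) * Real.pi / n)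
          = (Real.cot (k*Real.pi/n) * Real.cot (Real.pi/n) - 1)
            / (Real.cot (k*Real.pi/n) + Real.cot (Real.pi/n)) := by
      
        have heq : ((k+1:ℕ):ℝ) * Real.pi / n = k*Real.pi/n + Real.pi/n := by
          push_cast; ring
        rw [heq, cot_add' (sin_ne_zero_k n k hk1 hk2 hn) hsin1]
        rw [← heq]
        exact sin_ne_zero_k n (k+1) (by omega) h2 hn
      rw [key]
      exact div_mem (sub_mem (mul_mem hmem h1mem) (one_mem _)) (add_mem hmem h1mem)
    · have hk : k = 0 := by omega
      subst hk
      simpa using mem_adjoin_simple_self ℚ (Real.cot (Real.pi / n))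

open Real IntermediateField in
lemma cos_mem (n m : ℕ) (hm : 2 ≤ m) (hn : 2 ≤ n) (hmn : m ∣ n) :
    Real.cos (2 * Real.pi / m) ∈ adjoin ℚ {Real.cot (Real.pi / n)} := by
  obtain ⟨k, hk⟩ := hmn
  have hk1 : 1 ≤ k := by
    rcases Nat.eq_zero_or_pos k with h | h
    · subst h; simp at hk; omega
    · omega
  have hk2 : k ≤ n - 1 := by
    have : k < n := by nlinarith
    omega
  have hmm : (0:ℝ) < m := by positivity
  have hkk : (0:ℝ) < n := by positivity
  have heq : 2 * Real.pi / m = 2 * ((k:ℝ) * Real.pi / n) := by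
    have : (n:ℝ) = (m:ℝ) * k := by exact_mod_cast hk
    rw [this]
    have hkR : (0:ℝ) < k := by exact_mod_cast hk1
    field_simp
  rw [heq, cos_two_mul_cot (sin_ne_zero_k n k hk1 hk2 hn)]
  have hc := cot_mem n hn k hk1 hk2
  exact div_mem (sub_mem (pow_mem hc 2) (one_mem _)) (add_mem (pow_mem hc 2) (one_mem _))

open Real IntermediateField in
lemma cot_div_mem (n m : ℕ) (hm : 2 ≤ m) (hn : 2 ≤ n) (hmn : m ∣ n) :
    Real.cot (Real.pi / m) ∈ adjoin ℚ {Real.cot (Real.pi / n)} := by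
  obtain ⟨k, hk⟩ := hmn
  have hk1 : 1 ≤ k := by
    rcases Nat.eq_zero_or_pos k with h | h
    · subst h; simp at hk; omega
    · omega
  have hk2 : k ≤ n - 1 := by
    have : k < n := by nlinarith
    omega
  have heq : Real.pi / m = (k:ℝ) * Real.pi / n := by
    have : (n:ℝ) = (m:ℝ) * k := by exact_mod_cast hk
    have hmm : (0:ℝ) < m := by positivity
    have hkR : (0:ℝ) < k := by exact_mod_cast hk1
    rw [this]; field_simp
  rw [heq]
  exact cot_mem n hn k hk1 hk2

open IntermediateField Polynomial in
lemma exists_hom (m a : ℕ) (hm : 0 < m) (ha : Nat.Coprime a m) {η : ℂ}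
    (hη : IsPrimitiveRoot η m) (hint : IsIntegral ℚ η) :
    ∃ g : ℚ⟮η⟯ →ₐ[ℚ] ℂ, g (AdjoinSimple.gen ℚ η) = η ^ a := by
  have hmin : minpoly ℚ η = minpoly ℚ (η ^ a) := by
    rw [← Polynomial.cyclotomic_eq_minpoly_rat hη hm,
      ← Polynomial.cyclotomic_eq_minpoly_rat (hη.pow_of_coprime a ha) hm]
  have hroot : (aeval (η ^ a)) (minpoly ℚ η) = 0 := by
    rw [hmin]; exact minpoly.aeval ℚ (η ^ a)
  refine ⟨((AdjoinRoot.liftAlgHom (minpoly ℚ η) (Algebra.ofId ℚ ℂ) (η ^ a) (by rw [← hroot]; rfl)).comp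
    (adjoinRootEquivAdjoin ℚ hint).symm.toAlgHom).toRingHom.toRatAlgHom, ?_⟩
  simp [adjoinRootEquivAdjoin_symm_apply_gen, AdjoinRoot.liftAlgHom_root]

open IntermediateField Polynomial in
lemma gadget_core (u v w : ℝ) (hu : IsIntegral ℚ u)
    (hvE : v ∈ IntermediateField.adjoin ℚ {u})
    (hv0 : aeval v (minpoly ℚ u) = 0)
    (Q : ℚ[X]) (hQv : aeval u Q = v) (hQw : aeval v Q = w)
    (hne : w ≠ u) :
    ∃ σ : (IntermediateField.adjoin ℚ {u}) ≃+* (IntermediateField.adjoin ℚ {u}),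
      ∃ x, σ (σ x) ≠ x := by
  set E := IntermediateField.adjoin ℚ {u} with hE
  haveI : FiniteDimensional ℚ E := adjoin.finiteDimensional hu
  set pb : PowerBasis ℚ E := adjoin.powerBasis hu with hpb
  have hgen : pb.gen = AdjoinSimple.gen ℚ u := by rw [hpb, adjoin.powerBasis_gen]
  have hminpb : minpoly ℚ pb.gen = minpoly ℚ u := by rw [hgen]; exact minpoly_gen ℚ u
  have hv0' : aeval (⟨v, hvE⟩ : E) (minpoly ℚ pb.gen) = 0 := by
    rw [hminpb]
    have : (aeval (⟨v, hvE⟩ : E) (minpoly ℚ u) : ℝ) = aeval v (minpoly ℚ u) := by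
      exact (aeval_algHom_apply E.val _ _).symm
    exact Subtype.ext (by rw [this, hv0]; rfl)
  set ψ : E →ₐ[ℚ] E := pb.lift ⟨v, hvE⟩ hv0' with hψ
  have hinj : Function.Injective ψ := ψ.toRingHom.injective
  have hbij : Function.Bijective ψ :=
    ⟨hinj, (LinearMap.injective_iff_surjective (f := ψ.toLinearMap)).mp hinj⟩
  set σ : E ≃ₐ[ℚ] E := AlgEquiv.ofBijective ψ hbij with hσ
  refine ⟨σ.toRingEquiv, AdjoinSimple.gen ℚ u, ?_⟩
  have hσgen : σ (AdjoinSimple.gen ℚ u) = ⟨v, hvE⟩ := by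
    rw [hσ]; show ψ (AdjoinSimple.gen ℚ u) = _
    rw [← hgen, hψ]; exact pb.lift_gen _ hv0'
  have hvQ : (⟨v, hvE⟩ : E) = aeval (AdjoinSimple.gen ℚ u) Q := by
    apply Subtype.ext
    have : (aeval (AdjoinSimple.gen ℚ u) Q : ℝ) = aeval u Q := (aeval_algHom_apply E.val _ _).symm
    rw [this, hQv]
  have hstep : σ (σ (AdjoinSimple.gen ℚ u)) = aeval (⟨v, hvE⟩ : E) Q := by
    rw [hσgen, hvQ, ← aeval_algHom_apply σ, hσgen, ← hvQ]
  intro hcon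
  have : (σ (σ (AdjoinSimple.gen ℚ u)) : ℝ) = w := by
    rw [hstep]
    have : (aeval (⟨v, hvE⟩ : E) Q : ℝ) = aeval v Q := (aeval_algHom_apply E.val _ _).symm
    rw [this, hQw]
  rw [show σ.toRingEquiv (σ.toRingEquiv (AdjoinSimple.gen ℚ u)) = σ (σ (AdjoinSimple.gen ℚ u)) from rfl] at hcon
  rw [hcon] at this
  exact hne this.symm

lemma coe_aeval {F L : Type*} [Field F] [Field L] [Algebra F L]
    (K : IntermediateField F L) (x : K) (p : Polynomial F) :
    ((Polynomial.aeval x p : K) : L) = Polynomial.aeval (x : L) p :=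
  (Polynomial.aeval_algHom_apply K.val x p).symm

lemma cos_complex_def (x : ℂ) :
    Complex.cos x = (Complex.exp (x*Complex.I) + Complex.exp (-(x*Complex.I)))/2 := by
  rw [show -(x*Complex.I) = -x*Complex.I by ring]; rfl

open IntermediateField Polynomial Complex in
lemma cos_gadget (m a : ℕ) (hm : 2 ≤ m) (ha : Nat.Coprime a m)
    (hne : Real.cos (a * (a * (2 * Real.pi / m))) ≠ Real.cos (2 * Real.pi / m)) :
    ∃ σ : (IntermediateField.adjoin ℚ {Real.cos (2 * Real.pi / m)}) ≃+*
        (IntermediateField.adjoin ℚ {Real.cos (2 * Real.pi / m)}),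
      ∃ x, σ (σ x) ≠ x := by
  have hm0 : (m : ℕ) ≠ 0 := by omega
  have hmR : (m : ℝ) ≠ 0 := by positivity
  set θ : ℝ := 2 * Real.pi / m with hθ
  set u : ℝ := Real.cos θ with hu
  set v : ℝ := Real.cos (a * θ) with hv
  set w : ℝ := Real.cos (a * (a * θ)) with hw
  set η : ℂ := Complex.exp (2 * Real.pi * I / m) with hη
  have hprim : IsPrimitiveRoot η m := Complex.isPrimitiveRoot_exp m hm0
  have hint : IsIntegral ℚ η := (hprim.isIntegral (by omega)).tower_top
  haveI : FiniteDimensional ℚ (adjoin ℚ ({η} : Set ℂ)) := adjoin.finiteDimensional hint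
  set z := AdjoinSimple.gen ℚ η with hz
  -- powers of η as exponentials
  have hpow : ∀ k : ℕ, η ^ k = Complex.exp (((k * θ : ℝ) : ℂ) * I) := by
    intro k
    rw [hη, ← Complex.exp_nat_mul]
    congr 1
    rw [hθ]
    push_cast
    ring
  have hpowinv : ∀ k : ℕ, (η ^ k)⁻¹ = Complex.exp (-(((k * θ : ℝ) : ℂ) * I)) := by
    intro k; rw [hpow k, ← Complex.exp_neg]
  -- the element U
  set U : adjoin ℚ ({η} : Set ℂ) := (z + z⁻¹) / 2 with hU
  have hzc : (z : ℂ) = η := rfl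
  have hUc : (U : ℂ) = (η + η⁻¹) / 2 := by
    rw [hU]
    push_cast
    rfl
  have hucos : ∀ k : ℕ, ((Real.cos (k * θ) : ℝ) : ℂ) = (η ^ k + (η ^ k)⁻¹) / 2 := by
    intro k
    rw [hpowinv, hpow, Complex.ofReal_cos, cos_complex_def]
  have huU : ((u : ℝ) : ℂ) = (U : ℂ) := by
    rw [hUc, hu]
    have := hucos 1
    simpa using this
  have huK : ((u : ℝ) : ℂ) ∈ adjoin ℚ ({η} : Set ℂ) := by rw [huU]; exact U.2
  -- integrality of u
  have hUint : IsIntegral ℚ U := IsIntegral.of_finite ℚ U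
  have huint : IsIntegral ℚ u := by
    have h1 : IsIntegral ℚ ((u : ℝ) : ℂ) := by
      rw [huU]
      exact hUint.map (adjoin ℚ ({η} : Set ℂ)).val
    have h2 : ((u : ℝ) : ℂ) = algebraMap ℝ ℂ u := rfl
    rw [h2] at h1
    exact (isIntegral_algebraMap_iff (algebraMap ℝ ℂ).injective).mp h1
  set P : Polynomial ℚ := minpoly ℚ u with hP
  -- aeval of U
  have haevalu : aeval ((u : ℝ) : ℂ) P = 0 := by
    have : ((u:ℝ):ℂ) = (IsScalarTower.toAlgHom ℚ ℝ ℂ) u := rfl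
    rw [this, aeval_algHom_apply]
    rw [hP, minpoly.aeval]
    simp
  have hUP : aeval U P = 0 := by
    have h4 : ((aeval U P : adjoin ℚ ({η} : Set ℂ)) : ℂ) = 0 := by
      rw [← IntermediateField.coe_val, ← aeval_algHom_apply, IntermediateField.coe_val, ← huU]; exact haevalu
    exact Subtype.ext h4
  -- the embedding g
  obtain ⟨g, hg⟩ := exists_hom m a (by omega) ha hprim hint
  have hgU : g U = ((v : ℝ) : ℂ) := by
    rw [hU]
    rw [map_div₀, map_add, map_inv₀, map_ofNat]
    rw [hz, hg, hv]
    exact (hucos a).symm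
  have hv0 : aeval v P = 0 := by
    have h5 : aeval (g U) P = g (aeval U P) := aeval_algHom_apply g U P
    rw [hUP, map_zero, hgU] at h5
    have h6 : ((aeval v P : ℝ) : ℂ) = aeval ((v:ℝ):ℂ) P := by
      have hvv : ((v:ℝ):ℂ) = (IsScalarTower.toAlgHom ℚ ℝ ℂ) v := rfl
      rw [hvv, aeval_algHom_apply]
      rfl
    have h7 : ((aeval v P : ℝ) : ℂ) = 0 := by rw [h6, h5]
    exact_mod_cast h7
  -- Chebyshev polynomial
  set Q : Polynomial ℚ := Polynomial.Chebyshev.T ℚ a with hQ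
  have haevalQ : ∀ x : ℝ, aeval x Q = (Polynomial.Chebyshev.T ℝ a).eval x := by
    intro x
    rw [hQ, aeval_def, eval₂_eq_eval_map, Polynomial.Chebyshev.map_T]
  have hQv : aeval u Q = v := by
    rw [haevalQ, hu, Polynomial.Chebyshev.T_real_cos]
    rw [hv]
    norm_num
  have hQw : aeval v Q = w := by
    rw [haevalQ, hv, Polynomial.Chebyshev.T_real_cos]
    rw [hw]
    norm_num
  -- membership of v
  have hvE : v ∈ adjoin ℚ ({u} : Set ℝ) := by
    have hW := coe_aeval (adjoin ℚ ({u} : Set ℝ)) (AdjoinSimple.gen ℚ u) Q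
    rw [show ((AdjoinSimple.gen ℚ u : adjoin ℚ ({u} : Set ℝ)) : ℝ) = u from rfl, hQv] at hW
    rw [← hW]
    exact ((aeval (AdjoinSimple.gen ℚ u) Q)).2
  exact gadget_core u v w huint hvE hv0 Q hQv hQw hne

open Real Complex in
lemma cot_complex (θ : ℝ) (h : Real.sin θ ≠ 0) :
    ((Real.cot θ : ℝ) : ℂ) =
      Complex.I * (Complex.exp (((2*θ:ℝ):ℂ) * Complex.I) + 1) /
        (Complex.exp (((2*θ:ℝ):ℂ) * Complex.I) - 1) := by
  set c : ℂ := Complex.cos θ with hc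
  set s : ℂ := Complex.sin θ with hs
  have pyth : s^2 + c^2 = 1 := Complex.sin_sq_add_cos_sq _
  have hE : Complex.exp (((2*θ:ℝ):ℂ) * Complex.I) = (c + s * Complex.I)^2 := by
    rw [hc, hs, ← Complex.exp_mul_I,
      show (((2*θ:ℝ):ℂ)) * Complex.I = (2:ℕ) * ((θ:ℂ) * Complex.I) by push_cast; ring,
      Complex.exp_nat_mul]
  have hnum : (c + s*Complex.I)^2 + 1 = 2*c*(c + s*Complex.I) := by
    linear_combination s^2*Complex.I_sq - pyth
  have hden : (c + s*Complex.I)^2 - 1 = 2*s*Complex.I*(c + s*Complex.I) := by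
    linear_combination pyth - s^2 * Complex.I_sq
  have hexp : c + s*Complex.I ≠ 0 := by
    rw [hc, hs, ← Complex.exp_mul_I]; exact Complex.exp_ne_zero _
  have hsne : s ≠ 0 := by
    rw [hs, ← Complex.ofReal_sin]; exact_mod_cast h
  rw [Real.cot_eq_cos_div_sin, Complex.ofReal_div, Complex.ofReal_cos, Complex.ofReal_sin,
    hE, hnum, hden, ← hc, ← hs]
  field_simp

open IntermediateField Polynomial Complex in
lemma cot5_gadget :
    ∃ σ : (IntermediateField.adjoin ℚ {Real.cot (Real.pi/5)}) ≃+*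
        (IntermediateField.adjoin ℚ {Real.cot (Real.pi/5)}),
      ∃ x, σ (σ x) ≠ x := by
  have pipos := Real.pi_pos
  -- basic sin facts
  have hsin : ∀ r : ℝ, 0 < r → r < 1 → Real.sin (r * Real.pi) ≠ 0 := by
    intro r h0 h1
    refine ne_of_gt (Real.sin_pos_of_pos_of_lt_pi (by positivity) (by nlinarith))
  have hs15 : Real.sin (Real.pi/5) ≠ 0 := by
    have := hsin (1/5) (by norm_num) (by norm_num); rw [show (1/5:ℝ)*Real.pi = Real.pi/5 by ring] at this; exact this
  have hs25 : Real.sin (2*Real.pi/5) ≠ 0 := by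
    have := hsin (2/5) (by norm_num) (by norm_num); rw [show (2/5:ℝ)*Real.pi = 2*Real.pi/5 by ring] at this; exact this
  have hs35 : Real.sin (3*Real.pi/5) ≠ 0 := by
    have := hsin (3/5) (by norm_num) (by norm_num); rw [show (3/5:ℝ)*Real.pi = 3*Real.pi/5 by ring] at this; exact this
  set u : ℝ := Real.cot (Real.pi/5) with hu
  set v : ℝ := Real.cot (2*Real.pi/5) with hv
  -- u > 0
  have hcos5 : Real.cos (Real.pi/5) = (1 + Real.sqrt 5)/4 := Real.cos_pi_div_five
  have hsqrt5 : Real.sqrt 5 ^ 2 = 5 := Real.sq_sqrt (by norm_num)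
  have hsqrt5nn : 0 ≤ Real.sqrt 5 := Real.sqrt_nonneg 5
  have hsin5pos : 0 < Real.sin (Real.pi/5) :=
    Real.sin_pos_of_pos_of_lt_pi (by positivity) (by nlinarith)
  have hupos : 0 < u := by
    rw [hu, Real.cot_eq_cos_div_sin, hcos5]
    positivity
  have hune : u ≠ 0 := ne_of_gt hupos
  -- the quartic relation
  have hs2 : Real.sin (Real.pi/5)^2 = 1 - Real.cos (Real.pi/5)^2 := by
    nlinarith [Real.sin_sq_add_cos_sq (Real.pi/5)]
  have hsval : Real.sin (Real.pi/5)^2 = (5 - Real.sqrt 5)/8 := by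
    rw [hs2, hcos5]; field_simp; linear_combination (-8:ℝ)*hsqrt5
  have hsqrtlt : Real.sqrt 5 < 5 := by nlinarith
  have hu2 : u^2 = ((3 + Real.sqrt 5)/8) / ((5 - Real.sqrt 5)/8) := by
    rw [hu, Real.cot_eq_cos_div_sin, div_pow, hsval, hcos5]
    congr 1
    rw [div_pow]
    field_simp
    linear_combination (8:ℝ)*hsqrt5
  have R : 5*u^4 - 10*u^2 + 1 = 0 := by
    rw [show u^4 = (u^2)^2 by ring, hu2]
    have h1 : (5:ℝ) - Real.sqrt 5 ≠ 0 := by nlinarith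
    field_simp
    linear_combination (16 : ℝ)*hsqrt5
  -- v = (u^2-1)/(2u)
  have hveq : v = (u^2 - 1)/(2*u) := by
    rw [hv, show 2*Real.pi/5 = 2*(Real.pi/5) by ring,
      cot_two_mul hs15 (by rw [show 2*(Real.pi/5) = 2*Real.pi/5 by ring]; exact hs25), ← hu]
  have hviden : v * (2*u) = u^2 - 1 := by
    rw [hveq]; field_simp
  -- complex setup
  set η : ℂ := Complex.exp (2 * Real.pi * I / (20:ℕ)) with hη
  have hprim : IsPrimitiveRoot η 20 := Complex.isPrimitiveRoot_exp 20 (by norm_num)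
  have hint : IsIntegral ℚ η := (hprim.isIntegral (by norm_num)).tower_top
  haveI : FiniteDimensional ℚ (adjoin ℚ ({η} : Set ℂ)) := adjoin.finiteDimensional hint
  set z := AdjoinSimple.gen ℚ η with hz
  have hpow : ∀ k : ℕ, η ^ k = Complex.exp (((k * (Real.pi/10) : ℝ) : ℂ) * I) := by
    intro k
    rw [hη, ← Complex.exp_nat_mul]
    congr 1
    push_cast
    ring
  have hη5 : η^5 = I := by
    rw [hpow 5, show ((5:ℕ):ℝ) * (Real.pi/10) = Real.pi/2 by push_cast; ring,
      Complex.exp_mul_I, ← Complex.ofReal_cos, ← Complex.ofReal_sin,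
      Real.cos_pi_div_two, Real.sin_pi_div_two]
    norm_num
  have hη4 : η^4 = Complex.exp (((2*(Real.pi/5):ℝ):ℂ) * I) := by
    rw [hpow 4]
    congr 1
    push_cast
    ring
  have hη12 : η^12 = Complex.exp (((2*(3*Real.pi/5):ℝ):ℂ) * I) := by
    rw [hpow 12]
    congr 1
    push_cast
    ring
  have hη15 : η^15 = -I := by
    rw [show (15:ℕ) = 5*3 by norm_num, pow_mul, hη5]
    rw [pow_succ, Complex.I_sq]
    ring
  have hd4 : η^4 - 1 ≠ 0 := sub_ne_zero.mpr (hprim.pow_ne_one_of_pos_of_lt (by norm_num) (by norm_num))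
  have hd12 : η^12 - 1 ≠ 0 := sub_ne_zero.mpr (hprim.pow_ne_one_of_pos_of_lt (by norm_num) (by norm_num))
  -- the element U
  set U : adjoin ℚ ({η} : Set ℂ) := z^5 * (z^4 + 1) / (z^4 - 1) with hU
  have hUc : (U : ℂ) = η^5 * (η^4 + 1) / (η^4 - 1) := by
    rw [hU]; push_cast; rfl
  have huU : ((u : ℝ) : ℂ) = (U : ℂ) := by
    rw [hUc, hη5, hη4, hu, cot_complex (Real.pi/5) hs15]
  -- integrality of u
  have hUint : IsIntegral ℚ U := IsIntegral.of_finite ℚ U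
  have huint : IsIntegral ℚ u := by
    have h1 : IsIntegral ℚ ((u : ℝ) : ℂ) := by
      rw [huU]
      exact hUint.map (adjoin ℚ ({η} : Set ℂ)).val
    exact (isIntegral_algebraMap_iff (algebraMap ℝ ℂ).injective).mp h1
  set P : Polynomial ℚ := minpoly ℚ u with hP
  have haevalu : aeval ((u : ℝ) : ℂ) P = 0 := by
    have h2 : ((u:ℝ):ℂ) = (IsScalarTower.toAlgHom ℚ ℝ ℂ) u := rfl
    rw [h2, aeval_algHom_apply, hP, minpoly.aeval]
    simp
  have hUP : aeval U P = 0 := by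
    have h4 : ((aeval U P : adjoin ℚ ({η} : Set ℂ)) : ℂ) = 0 := by
      rw [← IntermediateField.coe_val, ← aeval_algHom_apply, IntermediateField.coe_val, ← huU]; exact haevalu
    exact Subtype.ext h4
  -- the embedding
  obtain ⟨g, hg⟩ := exists_hom 20 3 (by norm_num) (by decide) hprim hint
  have hgU : g U = ((v : ℝ) : ℂ) := by
    rw [← hz] at hg
    rw [hU]
    simp only [map_div₀, map_mul, map_pow, map_add, map_sub, map_one, hg]
    have e1 : (η^3)^5 = η^15 := by rw [← pow_mul]
    have e2 : (η^3)^4 = η^12 := by rw [← pow_mul]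
    have hv35 : v = - Real.cot (3*Real.pi/5) := by
      rw [hv, show 2*Real.pi/5 = Real.pi - 3*Real.pi/5 by ring, cot_pi_sub]
    rw [e1, e2, hη15, hη12, hv35, Complex.ofReal_neg, cot_complex (3*Real.pi/5) hs35]
    ring
  have hv0 : aeval v P = 0 := by
    have h5 : aeval (g U) P = g (aeval U P) := aeval_algHom_apply g U P
    rw [hUP, map_zero, hgU] at h5
    have h6 : ((aeval v P : ℝ) : ℂ) = aeval ((v:ℝ):ℂ) P := by
      have hvv : ((v:ℝ):ℂ) = (IsScalarTower.toAlgHom ℚ ℝ ℂ) v := rfl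
      rw [hvv, aeval_algHom_apply]
      rfl
    have h7 : ((aeval v P : ℝ) : ℂ) = 0 := by rw [h6, h5]
    exact_mod_cast h7
  -- membership of v
  have hvE : v ∈ adjoin ℚ ({u} : Set ℝ) := by
    rw [hveq]
    have hmemu : u ∈ adjoin ℚ ({u} : Set ℝ) := mem_adjoin_simple_self ℚ u
    have h2m : (2:ℝ) ∈ adjoin ℚ ({u} : Set ℝ) := by
      have := _root_.natCast_mem (adjoin ℚ ({u} : Set ℝ)) 2
      exact_mod_cast this
    exact div_mem (sub_mem (pow_mem hmemu 2) (one_mem _)) (mul_mem h2m hmemu)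
  -- the polynomial Q
  set Q : Polynomial ℚ := Polynomial.C (-5/2 : ℚ) * Polynomial.X^5
      + Polynomial.C (15/2 : ℚ) * Polynomial.X^3 + Polynomial.C (-5 : ℚ) * Polynomial.X with hQ
  have haQ : ∀ x : ℝ, aeval x Q = -5/2*x^5 + 15/2*x^3 + (-5)*x := by
    intro x
    rw [hQ]
    simp only [map_add, map_mul, aeval_C, map_pow, aeval_X]
    norm_num
  have hQv : aeval u Q = v := by
    rw [haQ]
    have hcancel : (-5/2*u^5 + 15/2*u^3 + (-5)*u) * (2*u) = v * (2*u) := by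
      rw [hviden]
      linear_combination (1 - u^2)*R
    exact mul_right_cancel₀ (by positivity) hcancel
  have hRv : 5*v^4 - 10*v^2 + 1 = 0 := by
    have h16 : (5*v^4 - 10*v^2 + 1) * (16*u^4) = 0 := by
      linear_combination (u^4 - 10*u^2 + 5)*R +
        (5*(2*u*v + u^2 - 1)*(4*u^2*v^2 + (u^2-1)^2) - 40*u^2*(2*u*v + u^2 - 1))*hviden
    rcases mul_eq_zero.mp h16 with h | h
    · exact h
    · exfalso; have : (0:ℝ) < 16*u^4 := by positivity
      linarith
  have hQw : aeval v Q = -u := by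
    rw [haQ]
    have hY2 : (-5/2*v^5 + 15/2*v^3 + (-5)*v) * 2 = v*(5*v^2 - 9) := by
      linear_combination (-v)*hRv
    have h8 : (v*(5*v^2 - 9) + 2*u) * (8*u^3) = 0 := by
      linear_combination (u^2 - 5)*R +
        (10*u*v*(2*u*v + u^2 - 1) + 5*(u^2-1)^2 - 36*u^2)*hviden
    have h9 : v*(5*v^2-9) = -2*u := by
      rcases mul_eq_zero.mp h8 with h | h
      · linarith
      · exfalso; have : (0:ℝ) < 8*u^3 := by positivity
        linarith
    linarith
  exact gadget_core u v (-u) huint hvE hv0 Q hQv hQw (by intro hcon; apply hune; linarith)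

lemma cos_ne_cos {x y : ℝ} (hx : x ∈ Set.Icc 0 Real.pi) (hy : y ∈ Set.Icc 0 Real.pi)
    (hxy : x ≠ y) : Real.cos x ≠ Real.cos y :=
  fun h => hxy (Real.injOn_cos hx hy h)

lemma nt24 (n : ℕ) (h0 : n ≠ 0)
    (hp : ∀ p, p.Prime → p ∣ n → p = 2 ∨ p = 3)
    (h16 : ¬ (16 ∣ n)) (h9 : ¬ (9 ∣ n)) : n ∣ 24 := by
  have h2 : n.factorization 2 ≤ 3 := by
    by_contra hc
    push_neg at hc
    apply h16
    calc (16:ℕ) = 2^4 := by norm_num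
    _ ∣ 2 ^ (n.factorization 2) := pow_dvd_pow 2 hc
    _ ∣ n := Nat.ordProj_dvd n 2
  have h3 : n.factorization 3 ≤ 1 := by
    by_contra hc
    push_neg at hc
    apply h9
    calc (9:ℕ) = 3^2 := by norm_num
    _ ∣ 3 ^ (n.factorization 3) := pow_dvd_pow 3 hc
    _ ∣ n := Nat.ordProj_dvd n 3
  rw [← Nat.factorization_le_iff_dvd h0 (by norm_num)]
  rw [Finsupp.le_def]
  intro p
  have h24 : (24:ℕ) = 2^3 * 3^1 := by norm_num
  by_cases hpp : p.Prime
  · by_cases hpd : p ∣ n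
    · rcases hp p hpp hpd with rfl | rfl
      · rw [h24, Nat.factorization_mul (by norm_num) (by norm_num), Nat.factorization_pow,
          Nat.factorization_pow, Nat.Prime.factorization Nat.prime_two,
          Nat.Prime.factorization Nat.prime_three]
        simp [Finsupp.single_apply]
        omega
      · rw [h24, Nat.factorization_mul (by norm_num) (by norm_num), Nat.factorization_pow,
          Nat.factorization_pow, Nat.Prime.factorization Nat.prime_two,
          Nat.Prime.factorization Nat.prime_three]
        simp [Finsupp.single_apply]
        omega
    · rw [Nat.factorization_eq_zero_of_not_dvd hpd]; omega
  · rw [Nat.factorization_eq_zero_of_not_prime n hpp]; omega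

/-- If `n ≥ 5`, `n ≠ 6`, and `Ω = ℚ(cot (π / n))` is flat (every field
automorphism of every subfield of `Ω` containing `ℚ` squares to the identity),
then `n ∈ {8, 12, 24}`. -/
theorem flat_cot_field_imp (n : ℕ) (hn : 5 ≤ n) (hn6 : n ≠ 6)
    (hflat : ∀ E : IntermediateField ℚ ℝ,
      E ≤ IntermediateField.adjoin ℚ {Real.cot (Real.pi / (n : ℝ))} →
        ∀ σ : E ≃+* E, ∀ x : E, σ (σ x) = x) :
    n = 8 ∨ n = 12 ∨ n = 24 := by
  by_contra hcon
  push_neg at hcon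
  obtain ⟨h8, h12, h24⟩ := hcon
  have hn2 : 2 ≤ n := by omega
  have pipos := Real.pi_pos
  have apply_gadget : ∀ u : ℝ, u ∈ IntermediateField.adjoin ℚ {Real.cot (Real.pi / (n:ℝ))} →
      (∃ σ : (IntermediateField.adjoin ℚ {u}) ≃+* (IntermediateField.adjoin ℚ {u}),
        ∃ x, σ (σ x) ≠ x) → False := by
    intro u hu hex
    obtain ⟨σ, x, hx⟩ := hex
    have hle : IntermediateField.adjoin ℚ {u} ≤
        IntermediateField.adjoin ℚ {Real.cot (Real.pi / (n:ℝ))} := by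
      rw [IntermediateField.adjoin_le_iff]
      simpa using hu
    exact hx (hflat _ hle σ x)
  -- case analysis
  by_cases h5 : 5 ∣ n
  · apply apply_gadget (Real.cot (Real.pi/5))
    · have := cot_div_mem n 5 (by norm_num) hn2 h5
      rw [show ((5:ℕ):ℝ) = 5 by norm_num] at this
      exact this
    · exact cot5_gadget
  by_cases h9 : 9 ∣ n
  · apply apply_gadget (Real.cos (2*Real.pi/(9:ℕ)))
    · exact cos_mem n 9 (by norm_num) hn2 h9
    · apply cos_gadget 9 2 (by norm_num) (by decide)
      apply cos_ne_cos
      · constructor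
        · positivity
        · rw [show (((2:ℕ):ℝ) * (((2:ℕ):ℝ) * (2 * Real.pi / ((9:ℕ):ℝ)))) = 8*Real.pi/9 by push_cast; ring]
          nlinarith
      · constructor
        · positivity
        · rw [show (2 * Real.pi / ((9:ℕ):ℝ)) = 2*Real.pi/9 by norm_num]
          nlinarith
      · rw [show (((2:ℕ):ℝ) * (((2:ℕ):ℝ) * (2 * Real.pi / ((9:ℕ):ℝ)))) = 8*Real.pi/9 by push_cast; ring,
          show (2 * Real.pi / ((9:ℕ):ℝ)) = 2*Real.pi/9 by norm_num]
        intro h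
        nlinarith
  by_cases h16 : 16 ∣ n
  · apply apply_gadget (Real.cos (2*Real.pi/(16:ℕ)))
    · exact cos_mem n 16 (by norm_num) hn2 h16
    · apply cos_gadget 16 3 (by norm_num) (by decide)
      rw [show (((3:ℕ):ℝ) * (((3:ℕ):ℝ) * (2 * Real.pi / ((16:ℕ):ℝ)))) = 2*Real.pi - 7*Real.pi/8 by push_cast; ring,
        Real.cos_two_pi_sub,
        show (2 * Real.pi / ((16:ℕ):ℝ)) = Real.pi/8 by push_cast; ring]
      apply cos_ne_cos
      · constructor
        · positivity
        · nlinarith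
      · constructor
        · positivity
        · nlinarith
      · intro h; nlinarith
  by_cases hbig : ∃ p, p.Prime ∧ p ∣ n ∧ 7 ≤ p
  · obtain ⟨p, hpp, hpd, hp7⟩ := hbig
    have hcop : Nat.Coprime 2 p := by
      rw [Nat.Prime.coprime_iff_not_dvd Nat.prime_two]
      intro hdvd
      have := (Nat.prime_dvd_prime_iff_eq Nat.prime_two hpp).mp hdvd
      omega
    apply apply_gadget (Real.cos (2*Real.pi/(p:ℕ)))
    · exact cos_mem n p (by omega) hn2 hpd
    · apply cos_gadget p 2 (by omega) hcop
      have hppos : (0:ℝ) < p := by positivity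
      by_cases hp8 : 8 ≤ p
      · have hp8R : (8:ℝ) ≤ p := by exact_mod_cast hp8
        apply cos_ne_cos
        · constructor
          · positivity
          · rw [show (((2:ℕ):ℝ) * (((2:ℕ):ℝ) * (2 * Real.pi / (p:ℝ)))) = 8*Real.pi/p by push_cast; ring]
            rw [div_le_iff₀ hppos]
            nlinarith
        · constructor
          · positivity
          · rw [div_le_iff₀ hppos]
            nlinarith
        · intro h
          push_cast at h
          have hpne : (p:ℝ) ≠ 0 := ne_of_gt hppos
          field_simp at h
          nlinarith
      · -- p = 7
        have hp7' : p = 7 := by omega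
        subst hp7'
        rw [show (((2:ℕ):ℝ) * (((2:ℕ):ℝ) * (2 * Real.pi / ((7:ℕ):ℝ)))) = 2*Real.pi - 6*Real.pi/7 by push_cast; ring,
          Real.cos_two_pi_sub,
          show (2 * Real.pi / ((7:ℕ):ℝ)) = 2*Real.pi/7 by norm_num]
        apply cos_ne_cos
        · constructor
          · positivity
          · nlinarith
        · constructor
          · positivity
          · nlinarith
        · intro h; nlinarith
  -- else n ∣ 24
  push_neg at hbig
  have hdvd24 : n ∣ 24 := by
    apply nt24 n (by omega) _ h16 h9
    intro p hpp hpd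
    have hlt : p < 7 := by
      by_contra hge
      push_neg at hge
      exact absurd (hbig p hpp hpd) (by omega)
    have h2le := hpp.two_le
    interval_cases p
    · left; rfl
    · right; rfl
    · exact absurd hpp (by norm_num)
    · exact absurd (hpd) (by intro hd; exact h5 hd)
    · exact absurd hpp (by norm_num)
  have hle24 : n ≤ 24 := Nat.le_of_dvd (by norm_num) hdvd24
  interval_cases n <;> omega
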